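/- Suppose the admissible family {X(τ):τ∈S_0} is RCE and sup_{τ∈S_0} E[X(τ)] < ∞. Then the family of value functions {v(τ):τ∈S_0} is RCE. -/

import Mathlib

open MeasureTheory Filter Set

noncomputable section

namespace OptMultStop

variable {Ω : Type*}

/-- A real function is right-continuous with left limits (RCLL) on `[0, T]`. -/
def RCLLOn (f : ℝ → ℝ) (T : ℝ) : Prop :=
  (∀ t ∈ Set.Ico (0 : ℝ) T, ContinuousWithinAt f (Set.Ici t) t) ∧
    ∀ t ∈ Set.Ioc (0 : ℝ) T, ∃ l : ℝ, Filter.Tendsto f (nhdsWithin t (Set.Iio t)) (nhds l)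

/-- A real function is right-continuous on `[0, T)`. -/
def RCOn (f : ℝ → ℝ) (T : ℝ) : Prop :=
  ∀ t ∈ Set.Ico (0 : ℝ) T, ContinuousWithinAt f (Set.Ici t) t

/-- `τ` is a stopping time for `ℱ` taking values in `[s ·, T]`; for `s = S` a stopping
time this encodes membership in `S_S`. -/
def IsStopIn [m : MeasurableSpace Ω] (ℱ : Filtration ℝ m) (T : ℝ) (s τ : Ω → ℝ) : Prop :=
  IsStoppingTime ℱ (fun ω => (τ ω : WithTop ℝ)) ∧ (∀ ω, s ω ≤ τ ω) ∧ ∀ ω, τ ω ≤ T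

/-- Membership in `S_0`: a stopping time with values in `[0, T]`. -/
def Stop0 [m : MeasurableSpace Ω] (ℱ : Filtration ℝ m) (T : ℝ) (τ : Ω → ℝ) : Prop :=
  IsStopIn ℱ T (fun _ => (0 : ℝ)) τ

/-- `g` is an essential supremum of the family of random variables `s`. -/
def IsEssSupFam [MeasurableSpace Ω] (μ : Measure Ω) (s : Set (Ω → ℝ)) (g : Ω → ℝ) : Prop :=
  (∀ f ∈ s, f ≤ᵐ[μ] g) ∧ ∀ h : Ω → ℝ, (∀ f ∈ s, f ≤ᵐ[μ] h) → g ≤ᵐ[μ] h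

/-- `g` is an essential infimum of the family of random variables `s`. -/
def IsEssInfFam [MeasurableSpace Ω] (μ : Measure Ω) (s : Set (Ω → ℝ)) (g : Ω → ℝ) : Prop :=
  (∀ f ∈ s, g ≤ᵐ[μ] f) ∧ ∀ h : Ω → ℝ, (∀ f ∈ s, h ≤ᵐ[μ] f) → h ≤ᵐ[μ] g

/-- An `𝔽`-consistent nonlinear expectation `(E, Dom(E))` on the horizon `[0, T]`,
together with its conditional versions at stopping times, satisfying the domain
axioms (D1)-(D3), (A1)-(A4) at stopping times, and hypotheses (H0)-(H5). -/
structure FExp [m : MeasurableSpace Ω] (μ : Measure Ω) (T : ℝ) (ℱ : Filtration ℝ m) where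
  /-- the domain `Dom(E)` -/
  Dom : Set (Ω → ℝ)
  /-- `cond τ ξ` is the conditional expectation `E_τ[ξ]` at the stopping time `τ` -/
  cond : (Ω → ℝ) → (Ω → ℝ) → Ω → ℝ
  /-- `E0 ξ` is the (deterministic) value `E[ξ] = E_0[ξ]` -/
  E0 : (Ω → ℝ) → ℝ
  zero_mem : (fun _ => (0 : ℝ)) ∈ Dom
  one_mem : (fun _ => (1 : ℝ)) ∈ Dom
  /-- (H4): all constants belong to the domain -/
  const_mem : ∀ c : ℝ, (fun _ => c) ∈ Dom
  add_mem : ∀ {ξ η : Ω → ℝ}, ξ ∈ Dom → η ∈ Dom → ξ + η ∈ Dom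
  indicator_mem : ∀ {ξ : Ω → ℝ}, ξ ∈ Dom → ∀ {A : Set Ω}, MeasurableSet A →
    A.indicator ξ ∈ Dom
  sandwich_mem : ∀ {ξ η : Ω → ℝ}, η ∈ Dom → (∀ᵐ ω ∂μ, 0 ≤ ξ ω ∧ ξ ω ≤ η ω) → ξ ∈ Dom
  cond_mem : ∀ {τ ξ : Ω → ℝ}, Stop0 ℱ T τ → ξ ∈ Dom → 0 ≤ᵐ[μ] ξ → cond τ ξ ∈ Dom
  cond_nonneg : ∀ {τ ξ : Ω → ℝ}, Stop0 ℱ T τ → ξ ∈ Dom → 0 ≤ᵐ[μ] ξ → 0 ≤ᵐ[μ] cond τ ξ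
  /-- `E_τ[ξ]` is `F_τ`-measurable -/
  cond_adapted : ∀ {τ ξ : Ω → ℝ} (hτ : Stop0 ℱ T τ), ξ ∈ Dom → 0 ≤ᵐ[μ] ξ →
    Measurable[hτ.1.measurableSpace] (cond τ ξ)
  /-- monotonicity -/
  mono : ∀ {τ ξ η : Ω → ℝ}, Stop0 ℱ T τ → ξ ∈ Dom → 0 ≤ᵐ[μ] ξ → η ∈ Dom → 0 ≤ᵐ[μ] η →
    ξ ≤ᵐ[μ] η → cond τ ξ ≤ᵐ[μ] cond τ η
  /-- strict monotonicity -/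
  strict_mono : ∀ {τ ξ η : Ω → ℝ}, Stop0 ℱ T τ → ξ ∈ Dom → 0 ≤ᵐ[μ] ξ → η ∈ Dom →
    0 ≤ᵐ[μ] η → ξ ≤ᵐ[μ] η → cond τ ξ =ᵐ[μ] cond τ η → ξ =ᵐ[μ] η
  /-- time consistency -/
  time_consistent : ∀ {σ τ ξ : Ω → ℝ}, Stop0 ℱ T σ → Stop0 ℱ T τ → (∀ ω, σ ω ≤ τ ω) →
    ξ ∈ Dom → 0 ≤ᵐ[μ] ξ → cond σ (cond τ ξ) =ᵐ[μ] cond σ ξ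
  /-- zero-one law -/
  zero_one : ∀ {τ ξ : Ω → ℝ} (hτ : Stop0 ℱ T τ), ξ ∈ Dom → 0 ≤ᵐ[μ] ξ →
    ∀ {A : Set Ω}, MeasurableSet[hτ.1.measurableSpace] A →
    cond τ (A.indicator ξ) =ᵐ[μ] A.indicator (cond τ ξ)
  /-- translation invariance -/
  translation : ∀ {τ ξ η : Ω → ℝ} (hτ : Stop0 ℱ T τ), ξ ∈ Dom → 0 ≤ᵐ[μ] ξ → η ∈ Dom →
    0 ≤ᵐ[μ] η → Measurable[hτ.1.measurableSpace] η → cond τ (ξ + η) =ᵐ[μ] cond τ ξ + η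
  /-- `F_0` is trivial: `E_0[ξ]` is the constant `E0 ξ` -/
  E0_eq : ∀ {ξ : Ω → ℝ}, ξ ∈ Dom → 0 ≤ᵐ[μ] ξ →
    cond (fun _ => (0 : ℝ)) ξ =ᵐ[μ] fun _ => E0 ξ
  /-- the process `t ↦ E_t[ξ]` has RCLL paths -/
  rcll_paths : ∀ {ξ : Ω → ℝ}, ξ ∈ Dom → 0 ≤ᵐ[μ] ξ →
    ∀ᵐ ω ∂μ, RCLLOn (fun t => cond (fun _ => t) ξ ω) T
  /-- (H0) -/
  h0 : ∀ {A : Set Ω}, MeasurableSet A → 0 < μ A →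
    Tendsto (fun n : ℕ => E0 (A.indicator fun _ => (n : ℝ))) atTop atTop
  /-- (H1) -/
  h1 : ∀ {ξ : Ω → ℝ}, ξ ∈ Dom → 0 ≤ᵐ[μ] ξ → ∀ {A : ℕ → Set Ω},
    (∀ n, MeasurableSet (A n)) → Monotone A → (∀ᵐ ω ∂μ, ω ∈ ⋃ n, A n) →
    Tendsto (fun n => E0 ((A n).indicator ξ)) atTop (nhds (E0 ξ))
  /-- (H2) -/
  h2 : ∀ {ξ η : Ω → ℝ}, ξ ∈ Dom → 0 ≤ᵐ[μ] ξ → η ∈ Dom → 0 ≤ᵐ[μ] η →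
    ∀ {A : ℕ → Set Ω}, (∀ n, MeasurableSet (A n)) → Antitone A →
    (∀ᵐ ω ∂μ, ω ∉ ⋂ n, A n) →
    Tendsto (fun n => E0 (ξ + (A n).indicator η)) atTop (nhds (E0 ξ))
  /-- (H5) -/
  h5 : ∀ {ξ : ℕ → Ω → ℝ} {ζ : Ω → ℝ}, (∀ n, ξ n ∈ Dom) → (∀ n, 0 ≤ᵐ[μ] ξ n) →
    (∀ᵐ ω ∂μ, Tendsto (fun n => ξ n ω) atTop (nhds (ζ ω))) →
    (∃ C : ℝ, ∃ᶠ n in atTop, E0 (ξ n) ≤ C) → ζ ∈ Dom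

variable [m : MeasurableSpace Ω] {μ : Measure Ω} {T : ℝ} {ℱ : Filtration ℝ m}

/-- (H6): sub-additivity. -/
def FExp.Subadditive (𝔈 : FExp μ T ℱ) : Prop :=
  ∀ ⦃τ ξ η : Ω → ℝ⦄, Stop0 ℱ T τ → ξ ∈ 𝔈.Dom → 0 ≤ᵐ[μ] ξ → η ∈ 𝔈.Dom → 0 ≤ᵐ[μ] η →
    𝔈.cond τ (ξ + η) ≤ᵐ[μ] 𝔈.cond τ ξ + 𝔈.cond τ η

/-- (H7): positive homogeneity. -/
def FExp.PosHom (𝔈 : FExp μ T ℱ) : Prop :=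
  ∀ ⦃τ ξ : Ω → ℝ⦄ (l : ℝ), 0 ≤ l → Stop0 ℱ T τ → ξ ∈ 𝔈.Dom → 0 ≤ᵐ[μ] ξ →
    𝔈.cond τ (fun ω => l * ξ ω) =ᵐ[μ] fun ω => l * 𝔈.cond τ ξ ω

/-- Admissible family of rewards indexed by stopping times. -/
def Admissible (𝔈 : FExp μ T ℱ) (X : (Ω → ℝ) → Ω → ℝ) : Prop :=
  (∀ τ : Ω → ℝ, ∀ hτ : Stop0 ℱ T τ, X τ ∈ 𝔈.Dom ∧ 0 ≤ᵐ[μ] X τ ∧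
      Measurable[hτ.1.measurableSpace] (X τ)) ∧
    ∀ τ σ : Ω → ℝ, Stop0 ℱ T τ → Stop0 ℱ T σ →
      ∀ᵐ ω ∂μ, τ ω = σ ω → X τ ω = X σ ω

/-- `sup_{τ ∈ S_0} E[X(τ)] < ∞`. -/
def BddRewardE0 (𝔈 : FExp μ T ℱ) (X : (Ω → ℝ) → Ω → ℝ) : Prop :=
  ∃ C : ℝ, ∀ τ : Ω → ℝ, Stop0 ℱ T τ → 𝔈.E0 (X τ) ≤ C

/-- `v` is the value function family of the single stopping problem for the reward `X`:
`v(S) = esssup_{τ ∈ S_S} E_S[X(τ)]`. -/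
def IsValueFam (𝔈 : FExp μ T ℱ) (X v : (Ω → ℝ) → Ω → ℝ) : Prop :=
  ∀ S : Ω → ℝ, Stop0 ℱ T S →
    IsEssSupFam μ {g | ∃ τ : Ω → ℝ, IsStopIn ℱ T S τ ∧ g = 𝔈.cond S (X τ)} (v S)

/-- An `E`-supermartingale system. -/
def SupermartSys (𝔈 : FExp μ T ℱ) (h : (Ω → ℝ) → Ω → ℝ) : Prop :=
  (∀ τ : Ω → ℝ, ∀ hτ : Stop0 ℱ T τ, h τ ∈ 𝔈.Dom ∧ 0 ≤ᵐ[μ] h τ ∧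
      Measurable[hτ.1.measurableSpace] (h τ)) ∧
    ∀ τ σ : Ω → ℝ, Stop0 ℱ T τ → Stop0 ℱ T σ → (∀ᵐ ω ∂μ, τ ω ≤ σ ω) →
      𝔈.cond τ (h σ) ≤ᵐ[μ] h τ

/-- Right-continuity along stopping times in `E`-expectation (RCE). -/
def RCE (𝔈 : FExp μ T ℱ) (X : (Ω → ℝ) → Ω → ℝ) : Prop :=
  ∀ τ : Ω → ℝ, Stop0 ℱ T τ → ∀ τs : ℕ → Ω → ℝ, (∀ n, Stop0 ℱ T (τs n)) →
    (∀ᵐ ω ∂μ, Antitone (fun n => τs n ω) ∧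
      Tendsto (fun n => τs n ω) atTop (nhds (τ ω))) →
    Tendsto (fun n => 𝔈.E0 (X (τs n))) atTop (nhds (𝔈.E0 (X τ)))

/-- Left-continuity along stopping times in `E`-expectation (LCE). -/
def LCE (𝔈 : FExp μ T ℱ) (X : (Ω → ℝ) → Ω → ℝ) : Prop :=
  ∀ τ : Ω → ℝ, Stop0 ℱ T τ → ∀ τs : ℕ → Ω → ℝ, (∀ n, Stop0 ℱ T (τs n)) →
    (∀ᵐ ω ∂μ, Monotone (fun n => τs n ω) ∧
      Tendsto (fun n => τs n ω) atTop (nhds (τ ω))) →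
    Tendsto (fun n => 𝔈.E0 (X (τs n))) atTop (nhds (𝔈.E0 (X τ)))

/-- Continuity along stopping times in `E`-expectation (CE). -/
def CE (𝔈 : FExp μ T ℱ) (X : (Ω → ℝ) → Ω → ℝ) : Prop :=
  RCE 𝔈 X ∧ LCE 𝔈 X

/-- Right-continuity along stopping times (RC): a.s. pointwise convergence. -/
def RCfam (𝔈 : FExp μ T ℱ) (X : (Ω → ℝ) → Ω → ℝ) : Prop :=
  ∀ τ : Ω → ℝ, Stop0 ℱ T τ → ∀ τs : ℕ → Ω → ℝ, (∀ n, Stop0 ℱ T (τs n)) →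
    (∀ᵐ ω ∂μ, Antitone (fun n => τs n ω) ∧
      Tendsto (fun n => τs n ω) atTop (nhds (τ ω))) →
    ∀ᵐ ω ∂μ, Tendsto (fun n => X (τs n) ω) atTop (nhds (X τ ω))

/-- Biadmissible family of rewards indexed by pairs of stopping times. -/
def Biadmissible (𝔈 : FExp μ T ℱ) (X : (Ω → ℝ) → (Ω → ℝ) → Ω → ℝ) : Prop :=
  (∀ τ σ : Ω → ℝ, ∀ hτ : Stop0 ℱ T τ, ∀ hσ : Stop0 ℱ T σ,
      X τ σ ∈ 𝔈.Dom ∧ 0 ≤ᵐ[μ] X τ σ ∧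
      Measurable[(hτ.1.max hσ.1).measurableSpace] (X τ σ)) ∧
    ∀ τ σ τ' σ' : Ω → ℝ, Stop0 ℱ T τ → Stop0 ℱ T σ → Stop0 ℱ T τ' → Stop0 ℱ T σ' →
      ∀ᵐ ω ∂μ, τ ω = τ' ω → σ ω = σ' ω → X τ σ ω = X τ' σ' ω

/-- `sup_{τ,σ ∈ S_0} E[X(τ,σ)] < ∞`. -/
def BddReward2E0 (𝔈 : FExp μ T ℱ) (X : (Ω → ℝ) → (Ω → ℝ) → Ω → ℝ) : Prop :=
  ∃ C : ℝ, ∀ τ σ : Ω → ℝ, Stop0 ℱ T τ → Stop0 ℱ T σ → 𝔈.E0 (X τ σ) ≤ C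

/-- `v` is the value function family of the double stopping problem:
`v(S) = esssup_{τ₁,τ₂ ∈ S_S} E_S[X(τ₁,τ₂)]`. -/
def IsValueFam2 (𝔈 : FExp μ T ℱ) (X : (Ω → ℝ) → (Ω → ℝ) → Ω → ℝ)
    (v : (Ω → ℝ) → Ω → ℝ) : Prop :=
  ∀ S : Ω → ℝ, Stop0 ℱ T S →
    IsEssSupFam μ
      {g | ∃ τ₁ τ₂ : Ω → ℝ, IsStopIn ℱ T S τ₁ ∧ IsStopIn ℱ T S τ₂ ∧
        g = 𝔈.cond S (X τ₁ τ₂)} (v S)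

/-- `u₁(θ) = esssup_{τ₁ ∈ S_θ} E_θ[X(τ₁, θ)]`. -/
def IsU1 (𝔈 : FExp μ T ℱ) (X : (Ω → ℝ) → (Ω → ℝ) → Ω → ℝ) (u₁ : (Ω → ℝ) → Ω → ℝ) : Prop :=
  ∀ θ : Ω → ℝ, Stop0 ℱ T θ →
    IsEssSupFam μ {g | ∃ τ : Ω → ℝ, IsStopIn ℱ T θ τ ∧ g = 𝔈.cond θ (X τ θ)} (u₁ θ)

/-- `u₂(θ) = esssup_{τ₂ ∈ S_θ} E_θ[X(θ, τ₂)]`. -/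
def IsU2 (𝔈 : FExp μ T ℱ) (X : (Ω → ℝ) → (Ω → ℝ) → Ω → ℝ) (u₂ : (Ω → ℝ) → Ω → ℝ) : Prop :=
  ∀ θ : Ω → ℝ, Stop0 ℱ T θ →
    IsEssSupFam μ {g | ∃ τ : Ω → ℝ, IsStopIn ℱ T θ τ ∧ g = 𝔈.cond θ (X θ τ)} (u₂ θ)

/-- Uniform right-continuity of a biadmissible family along stopping times in
`ℰ`-expectation (URCℰ). -/
def URCE2 (ℰ : FExp μ T ℱ) (X : (Ω → ℝ) → (Ω → ℝ) → Ω → ℝ) : Prop :=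
  ∀ σ : Ω → ℝ, Stop0 ℱ T σ → ∀ σs : ℕ → Ω → ℝ, (∀ n, Stop0 ℱ T (σs n)) →
    (∀ᵐ ω ∂μ, Antitone (fun n => σs n ω) ∧
      Tendsto (fun n => σs n ω) atTop (nhds (σ ω))) →
    ∀ ε : ℝ, 0 < ε → ∃ N : ℕ, ∀ n ≥ N, ∀ τ : Ω → ℝ, Stop0 ℱ T τ →
      ℰ.E0 (fun ω => |X τ σ ω - X τ (σs n) ω|) ≤ ε ∧
      ℰ.E0 (fun ω => |X σ τ ω - X (σs n) τ ω|) ≤ ε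

/-- Uniform left-continuity of a biadmissible family along stopping times in
`ℰ`-expectation (ULCℰ). -/
def ULCE2 (ℰ : FExp μ T ℱ) (X : (Ω → ℝ) → (Ω → ℝ) → Ω → ℝ) : Prop :=
  ∀ σ : Ω → ℝ, Stop0 ℱ T σ → ∀ σs : ℕ → Ω → ℝ, (∀ n, Stop0 ℱ T (σs n)) →
    (∀ᵐ ω ∂μ, Monotone (fun n => σs n ω) ∧
      Tendsto (fun n => σs n ω) atTop (nhds (σ ω))) →
    ∀ ε : ℝ, 0 < ε → ∃ N : ℕ, ∀ n ≥ N, ∀ τ : Ω → ℝ, Stop0 ℱ T τ →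
      ℰ.E0 (fun ω => |X τ σ ω - X τ (σs n) ω|) ≤ ε ∧
      ℰ.E0 (fun ω => |X σ τ ω - X (σs n) τ ω|) ≤ ε

/-- Uniform continuity (UCℰ) of a biadmissible family. -/
def UCE2 (ℰ : FExp μ T ℱ) (X : (Ω → ℝ) → (Ω → ℝ) → Ω → ℝ) : Prop :=
  URCE2 ℰ X ∧ ULCE2 ℰ X

/-- `(E, Dom(E))` is dominated by `(Ẽ, Dom(Ẽ))`. -/
def Dominated (𝔈 𝔉 : FExp μ T ℱ) : Prop :=
  𝔈.Dom ⊆ 𝔉.Dom ∧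
    ∀ τ : Ω → ℝ, Stop0 ℱ T τ → ∀ ξ η : Ω → ℝ, ξ ∈ 𝔈.Dom → η ∈ 𝔈.Dom →
      ∀ᵐ ω ∂μ, 𝔈.cond τ (ξ + η) ω - 𝔈.cond τ η ω ≤ 𝔉.cond τ ξ ω

/-- The filtration contains all `μ`-null sets (part of the usual conditions). -/
def CompleteFiltration (μ : Measure Ω) (ℱ : Filtration ℝ m) : Prop :=
  ∀ s : Set Ω, μ s = 0 → ∀ t : ℝ, MeasurableSet[ℱ t] s

/-- The filtration is right-continuous (part of the usual conditions). -/
def RightContinuousFiltration (ℱ : Filtration ℝ m) : Prop :=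
  ∀ t : ℝ, (ℱ t : MeasurableSpace Ω) = ⨅ u ∈ Set.Ioi t, ℱ u

/-- A `d`-tuple of stopping times, all in `S_s`. -/
def StopVec (ℱ : Filtration ℝ m) (T : ℝ) (s : Ω → ℝ) {d : ℕ} (τ : Fin d → Ω → ℝ) : Prop :=
  ∀ i, IsStopIn ℱ T s (τ i)

/-- A `d`-admissible family of rewards. -/
def DAdmissible (𝔈 : FExp μ T ℱ) {d : ℕ} (X : (Fin d → Ω → ℝ) → Ω → ℝ) : Prop :=
  (∀ τ : Fin d → Ω → ℝ, StopVec ℱ T (fun _ => (0 : ℝ)) τ →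
      X τ ∈ 𝔈.Dom ∧ 0 ≤ᵐ[μ] X τ ∧
      ∀ h : IsStoppingTime ℱ fun ω => ((⨆ i, τ i ω : ℝ) : WithTop ℝ),
        Measurable[h.measurableSpace] (X τ)) ∧
    ∀ τ σ : Fin d → Ω → ℝ, StopVec ℱ T (fun _ => (0 : ℝ)) τ →
      StopVec ℱ T (fun _ => (0 : ℝ)) σ →
      ∀ᵐ ω ∂μ, (∀ i, τ i ω = σ i ω) → X τ ω = X σ ω

/-- `sup_{τ ∈ S_0^d} E[X(τ)] < ∞`. -/
def BddRewardDE0 (𝔈 : FExp μ T ℱ) {d : ℕ} (X : (Fin d → Ω → ℝ) → Ω → ℝ) : Prop :=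
  ∃ C : ℝ, ∀ τ : Fin d → Ω → ℝ, StopVec ℱ T (fun _ => (0 : ℝ)) τ → 𝔈.E0 (X τ) ≤ C

/-- `v` is the value function family of the `d`-stopping problem:
`v(S) = esssup_{τ ∈ S_S^d} E_S[X(τ)]`. -/
def IsValueFamD (𝔈 : FExp μ T ℱ) {d : ℕ} (X : (Fin d → Ω → ℝ) → Ω → ℝ)
    (v : (Ω → ℝ) → Ω → ℝ) : Prop :=
  ∀ S : Ω → ℝ, Stop0 ℱ T S →
    IsEssSupFam μ
      {g | ∃ τ : Fin d → Ω → ℝ, StopVec ℱ T S τ ∧ g = 𝔈.cond S (X τ)} (v S)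

/-- `u^{(i)}(θ) = esssup_{τ ∈ S_θ^{d-1}} E_θ[X^{(i)}(τ, θ)]`, where `X^{(i)}(τ, θ)`
inserts `θ` in the `i`-th slot. -/
def IsUi (𝔈 : FExp μ T ℱ) {d : ℕ} (X : (Fin (d + 1) → Ω → ℝ) → Ω → ℝ)
    (ui : Fin (d + 1) → (Ω → ℝ) → Ω → ℝ) : Prop :=
  ∀ i : Fin (d + 1), ∀ θ : Ω → ℝ, Stop0 ℱ T θ →
    IsEssSupFam μ
      {g | ∃ τ : Fin d → Ω → ℝ, StopVec ℱ T θ τ ∧ g = 𝔈.cond θ (X (i.insertNth θ τ))}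
      (ui i θ)

/-- Uniform continuity (UCE) of a `d`-admissible family along monotone sequences of
stopping times. -/
def UCED (𝔈 : FExp μ T ℱ) {d : ℕ} (X : (Fin (d + 1) → Ω → ℝ) → Ω → ℝ) : Prop :=
  ∀ i : Fin (d + 1), ∀ S : Ω → ℝ, Stop0 ℱ T S → ∀ Ss : ℕ → Ω → ℝ,
    (∀ n, Stop0 ℱ T (Ss n)) →
    ((∀ᵐ ω ∂μ, Monotone fun n => Ss n ω) ∨ (∀ᵐ ω ∂μ, Antitone fun n => Ss n ω)) →
    (∀ᵐ ω ∂μ, Tendsto (fun n => Ss n ω) atTop (nhds (S ω))) →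
    ∀ ε : ℝ, 0 < ε → ∃ N : ℕ, ∀ n ≥ N, ∀ θ : Fin d → Ω → ℝ,
      StopVec ℱ T (fun _ => (0 : ℝ)) θ →
      𝔈.E0 (fun ω => |X (i.insertNth (Ss n) θ) ω - X (i.insertNth S θ) ω|) ≤ ε


/-! ### Auxiliary lemmas -/

section Aux

variable [IsProbabilityMeasure μ]

lemma ae_neBot' (μ : Measure Ω) [IsProbabilityMeasure μ] : (ae μ).NeBot :=
  IsProbabilityMeasure.ae_neBot

lemma const_le_const_ae {a b : ℝ} (h : (fun _ : Ω => a) ≤ᵐ[μ] fun _ => b) : a ≤ b := by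
  have : (ae μ).NeBot := ae_neBot' μ
  obtain ⟨ω, hω⟩ := h.exists
  exact hω

lemma const_eq_const_ae {a b : ℝ} (h : (fun _ : Ω => a) =ᵐ[μ] fun _ => b) : a = b :=
  le_antisymm (const_le_const_ae h.le) (const_le_const_ae h.symm.le)

lemma stop0_zero (hT : 0 < T) : Stop0 ℱ T (fun _ => (0 : ℝ)) :=
  ⟨isStoppingTime_const ℱ (0 : ℝ), fun _ => le_rfl, fun _ => hT.le⟩

lemma stop0_of_isStopIn {σ ρ : Ω → ℝ} (hσ : Stop0 ℱ T σ) (hρ : IsStopIn ℱ T σ ρ) :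
    Stop0 ℱ T ρ :=
  ⟨hρ.1, fun ω => le_trans (hσ.2.1 ω) (hρ.2.1 ω), hρ.2.2⟩

lemma isStopIn_self {σ : Ω → ℝ} (hσ : Stop0 ℱ T σ) : IsStopIn ℱ T σ σ :=
  ⟨hσ.1, fun _ => le_rfl, hσ.2.2⟩

variable {𝔈 : FExp μ T ℱ}

lemma E0_mono (hT : 0 < T) {ξ η : Ω → ℝ} (hξ : ξ ∈ 𝔈.Dom) (hξ0 : 0 ≤ᵐ[μ] ξ)
    (hη : η ∈ 𝔈.Dom) (hη0 : 0 ≤ᵐ[μ] η) (hle : ξ ≤ᵐ[μ] η) : 𝔈.E0 ξ ≤ 𝔈.E0 η := by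
  have h := 𝔈.mono (stop0_zero hT) hξ hξ0 hη hη0 hle
  have e1 := 𝔈.E0_eq hξ hξ0
  have e2 := 𝔈.E0_eq hη hη0
  exact const_le_const_ae ((e1.symm.le.trans h).trans e2.le)

lemma E0_congr (hT : 0 < T) {ξ η : Ω → ℝ} (hξ : ξ ∈ 𝔈.Dom) (hξ0 : 0 ≤ᵐ[μ] ξ)
    (hη : η ∈ 𝔈.Dom) (hη0 : 0 ≤ᵐ[μ] η) (h : ξ =ᵐ[μ] η) : 𝔈.E0 ξ = 𝔈.E0 η :=
  le_antisymm (E0_mono hT hξ hξ0 hη hη0 h.le) (E0_mono hT hη hη0 hξ hξ0 h.symm.le)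

lemma E0_cond (hT : 0 < T) {σ ξ : Ω → ℝ} (hσ : Stop0 ℱ T σ) (hξ : ξ ∈ 𝔈.Dom)
    (hξ0 : 0 ≤ᵐ[μ] ξ) : 𝔈.E0 (𝔈.cond σ ξ) = 𝔈.E0 ξ := by
  have tc := 𝔈.time_consistent (stop0_zero hT) hσ (fun ω => hσ.2.1 ω) hξ hξ0
  have e1 := 𝔈.E0_eq (𝔈.cond_mem hσ hξ hξ0) (𝔈.cond_nonneg hσ hξ hξ0)
  have e2 := 𝔈.E0_eq hξ hξ0
  exact const_eq_const_ae ((e1.symm.trans tc).trans e2)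

lemma E0_add_const (hT : 0 < T) {ξ : Ω → ℝ} (hξ : ξ ∈ 𝔈.Dom) (hξ0 : 0 ≤ᵐ[μ] ξ)
    {c : ℝ} (hc : 0 ≤ c) : 𝔈.E0 (ξ + fun _ => c) = 𝔈.E0 ξ + c := by
  have tr := 𝔈.translation (stop0_zero hT) hξ hξ0 (𝔈.const_mem c)
    (Eventually.of_forall fun _ => hc) measurable_const
  have e1 := 𝔈.E0_eq (𝔈.add_mem hξ (𝔈.const_mem c))
    (by filter_upwards [hξ0] with ω h; simpa using add_nonneg (by simpa using h) hc)
  have e2 := 𝔈.E0_eq hξ hξ0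
  refine const_eq_const_ae (e1.symm.trans (tr.trans ?_))
  filter_upwards [e2] with ω h
  simp only [Pi.add_apply]
  rw [h]

lemma cond_congr {σ ξ η : Ω → ℝ} (hσ : Stop0 ℱ T σ) (hξ : ξ ∈ 𝔈.Dom) (hξ0 : 0 ≤ᵐ[μ] ξ)
    (hη : η ∈ 𝔈.Dom) (hη0 : 0 ≤ᵐ[μ] η) (h : ξ =ᵐ[μ] η) :
    𝔈.cond σ ξ =ᵐ[μ] 𝔈.cond σ η :=
  (𝔈.mono hσ hξ hξ0 hη hη0 h.le).antisymm (𝔈.mono hσ hη hη0 hξ hξ0 h.symm.le)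

/-- Monotone convergence for `E0`, derived from (H1). -/
lemma mct (hT : 0 < T) (𝔈 : FExp μ T ℱ) {ξ : ℕ → Ω → ℝ} {θ : Ω → ℝ}
    (hmem : ∀ n, ξ n ∈ 𝔈.Dom) (hpos : ∀ n, 0 ≤ᵐ[μ] ξ n) (hmeas : ∀ n, Measurable (ξ n))
    (hθmem : θ ∈ 𝔈.Dom) (hθpos : 0 ≤ᵐ[μ] θ) (hθmeas : Measurable θ)
    (hmono : ∀ᵐ ω ∂μ, ∀ n, ξ n ω ≤ ξ (n + 1) ω)
    (htend : ∀ᵐ ω ∂μ, Tendsto (fun n => ξ n ω) atTop (nhds (θ ω))) :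
    Tendsto (fun n => 𝔈.E0 (ξ n)) atTop (nhds (𝔈.E0 θ)) := by
  have hle : ∀ n, ξ n ≤ᵐ[μ] θ := by
    intro n
    filter_upwards [hmono, htend] with ω h1 h2
    exact (monotone_nat_of_le_succ h1).ge_of_tendsto h2 n
  have hub : ∀ n, 𝔈.E0 (ξ n) ≤ 𝔈.E0 θ := fun n =>
    E0_mono hT (hmem n) (hpos n) hθmem hθpos (hle n)
  have humono : Monotone fun n => 𝔈.E0 (ξ n) :=
    monotone_nat_of_le_succ fun n => E0_mono hT (hmem n) (hpos n) (hmem (n + 1))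
      (hpos (n + 1)) (hmono.mono fun ω h => h n)
  have hbdd : BddAbove (Set.range fun n => 𝔈.E0 (ξ n)) :=
    ⟨𝔈.E0 θ, by rintro r ⟨n, rfl⟩; exact hub n⟩
  have htL : Tendsto (fun n => 𝔈.E0 (ξ n)) atTop (nhds (⨆ n, 𝔈.E0 (ξ n))) :=
    tendsto_atTop_ciSup humono hbdd
  have hLle : (⨆ n, 𝔈.E0 (ξ n)) ≤ 𝔈.E0 θ := ciSup_le hub
  have hkey : ∀ ε : ℝ, 0 < ε → 𝔈.E0 θ ≤ (⨆ n, 𝔈.E0 (ξ n)) + ε := by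
    intro ε hε
    have hGmeas : MeasurableSet {ω : Ω | ∀ n, ξ n ω ≤ ξ (n + 1) ω} := by
      rw [Set.setOf_forall]
      exact MeasurableSet.iInter fun n => measurableSet_le (hmeas n) (hmeas (n + 1))
    set G : Set Ω := {ω : Ω | ∀ n, ξ n ω ≤ ξ (n + 1) ω} with hG_def
    set A : ℕ → Set Ω := fun n => (G ∩ {ω | θ ω - ε ≤ ξ n ω}) ∪ Gᶜ with hA_def
    have hAmeas : ∀ n, MeasurableSet (A n) := fun n =>
      (hGmeas.inter (measurableSet_le (hθmeas.sub measurable_const) (hmeas n))).union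
        hGmeas.compl
    have hAmono : Monotone A := by
      intro a b hab ω hω
      rcases hω with ⟨hG, hle'⟩ | h
      · exact Or.inl ⟨hG, le_trans hle' ((monotone_nat_of_le_succ hG) hab)⟩
      · exact Or.inr h
    have hAcover : ∀ᵐ ω ∂μ, ω ∈ ⋃ n, A n := by
      filter_upwards [htend] with ω h
      obtain ⟨n, hn⟩ := (h.eventually (eventually_gt_nhds (sub_lt_self (θ ω) hε))).exists
      by_cases hG : ω ∈ G
      · exact Set.mem_iUnion.mpr ⟨n, Or.inl ⟨hG, hn.le⟩⟩
      · exact Set.mem_iUnion.mpr ⟨0, Or.inr hG⟩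
    have h1app := 𝔈.h1 hθmem hθpos hAmeas hAmono hAcover
    have hbound : ∀ n, 𝔈.E0 ((A n).indicator θ) ≤ 𝔈.E0 (ξ n) + ε := by
      intro n
      have hsum : 𝔈.E0 (ξ n + fun _ => ε) = 𝔈.E0 (ξ n) + ε :=
        E0_add_const hT (hmem n) (hpos n) hε.le
      rw [← hsum]
      refine E0_mono hT (𝔈.indicator_mem hθmem (hAmeas n)) ?_
        (𝔈.add_mem (hmem n) (𝔈.const_mem ε)) ?_ ?_
      · filter_upwards [hθpos] with ω h
        exact Set.indicator_apply_nonneg fun _ => by simpa using h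
      · filter_upwards [hpos n] with ω h
        simpa using add_nonneg (by simpa using h) hε.le
      · filter_upwards [hmono, hpos n] with ω hω hp
        by_cases hA : ω ∈ A n
        · rw [Set.indicator_of_mem hA]
          rcases hA with ⟨_, hle'⟩ | hG
          · have h' : θ ω - ε ≤ ξ n ω := hle'
            simp only [Pi.add_apply]
            linarith
          · exact absurd hω hG
        · rw [Set.indicator_of_notMem hA]
          simp only [Pi.add_apply]
          have h' : (0 : ℝ) ≤ ξ n ω := by simpa using hp
          linarith
    refine le_of_tendsto h1app (Eventually.of_forall fun n => ?_)
    exact le_trans (hbound n) (add_le_add_left (le_ciSup hbdd n) ε)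
  have hfin : 𝔈.E0 θ ≤ ⨆ n, 𝔈.E0 (ξ n) := le_of_forall_pos_le_add hkey
  have hLeq : (⨆ n, 𝔈.E0 (ξ n)) = 𝔈.E0 θ := le_antisymm hLle hfin
  rwa [hLeq] at htL

/-- An a.e.-increasing sequence in `Dom⁺` with bounded `E0` is a.e. bounded above,
by (H0) and (H1). -/
lemma ae_bddAbove_of_E0_bdd (hT : 0 < T) (𝔈 : FExp μ T ℱ) {ξ : ℕ → Ω → ℝ} {t : ℝ}
    (hmem : ∀ n, ξ n ∈ 𝔈.Dom) (hpos : ∀ n, 0 ≤ᵐ[μ] ξ n) (hmeas : ∀ n, Measurable (ξ n))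
    (hmono : ∀ᵐ ω ∂μ, ∀ n, ξ n ω ≤ ξ (n + 1) ω) (hbd : ∀ n, 𝔈.E0 (ξ n) ≤ t) :
    ∀ᵐ ω ∂μ, BddAbove (Set.range fun n => ξ n ω) := by
  have h1m : MeasurableSet {ω : Ω | ∀ n, ξ n ω ≤ ξ (n + 1) ω} := by
    rw [Set.setOf_forall]
    exact MeasurableSet.iInter fun n => measurableSet_le (hmeas n) (hmeas (n + 1))
  have h2m : MeasurableSet {ω : Ω | ∀ k : ℕ, ∃ n, (k : ℝ) ≤ ξ n ω} := by
    rw [Set.setOf_forall]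
    refine MeasurableSet.iInter fun k => ?_
    rw [Set.setOf_exists]
    exact MeasurableSet.iUnion fun n => measurableSet_le measurable_const (hmeas n)
  set B : Set Ω :=
    {ω : Ω | ∀ n, ξ n ω ≤ ξ (n + 1) ω} ∩ {ω : Ω | ∀ k : ℕ, ∃ n, (k : ℝ) ≤ ξ n ω} with hB_def
  have hBmeas : MeasurableSet B := h1m.inter h2m
  have hB0 : μ B = 0 := by
    by_contra hB
    have hpos' : 0 < μ B := lt_of_le_of_ne zero_le (Ne.symm hB)
    have key : ∀ k : ℕ, 𝔈.E0 (B.indicator fun _ => (k : ℝ)) ≤ t := by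
      intro k
      set Ck : ℕ → Set Ω := fun n => (B ∩ {ω | (k : ℝ) ≤ ξ n ω}) ∪ Bᶜ with hCk_def
      have hCmeas : ∀ n, MeasurableSet (Ck n) := fun n =>
        (hBmeas.inter (measurableSet_le measurable_const (hmeas n))).union hBmeas.compl
      have hCmono : Monotone Ck := by
        intro a b hab ω hω
        rcases hω with ⟨hB', hle'⟩ | h
        · exact Or.inl ⟨hB', le_trans hle' ((monotone_nat_of_le_succ hB'.1) hab)⟩
        · exact Or.inr h
      have hCcover : ∀ᵐ ω ∂μ, ω ∈ ⋃ n, Ck n := by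
        refine Eventually.of_forall fun ω => ?_
        by_cases hω : ω ∈ B
        · obtain ⟨n, hn⟩ := hω.2 k
          exact Set.mem_iUnion.mpr ⟨n, Or.inl ⟨hω, hn⟩⟩
        · exact Set.mem_iUnion.mpr ⟨0, Or.inr hω⟩
      have hkmem : (B.indicator fun _ => (k : ℝ)) ∈ 𝔈.Dom :=
        𝔈.indicator_mem (𝔈.const_mem _) hBmeas
      have hkpos : 0 ≤ᵐ[μ] B.indicator fun _ => (k : ℝ) :=
        Eventually.of_forall fun ω => Set.indicator_apply_nonneg fun _ => Nat.cast_nonneg k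
      have happ := 𝔈.h1 hkmem hkpos hCmeas hCmono hCcover
      refine le_of_tendsto happ (Eventually.of_forall fun n => ?_)
      refine le_trans
        (E0_mono hT (𝔈.indicator_mem hkmem (hCmeas n)) ?_ (hmem n) (hpos n) ?_) (hbd n)
      · exact Eventually.of_forall fun ω => Set.indicator_apply_nonneg fun _ =>
          Set.indicator_apply_nonneg fun _ => Nat.cast_nonneg k
      · filter_upwards [hpos n] with ω hp
        have hp' : (0 : ℝ) ≤ ξ n ω := by simpa using hp
        by_cases hc : ω ∈ Ck n
        · rw [Set.indicator_of_mem hc]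
          by_cases hb : ω ∈ B
          · rw [Set.indicator_of_mem hb]
            rcases hc with ⟨_, hle'⟩ | hb'
            · exact hle'
            · exact absurd hb hb'
          · rw [Set.indicator_of_notMem hb]; exact hp'
        · rw [Set.indicator_of_notMem hc]; exact hp'
    obtain ⟨k, hk⟩ := ((𝔈.h0 hBmeas hpos').eventually_gt_atTop t).exists
    exact absurd (key k) (not_le.mpr hk)
  have hBc : ∀ᵐ ω ∂μ, ω ∉ B := measure_eq_zero_iff_ae_notMem.mp hB0
  filter_upwards [hmono, hBc] with ω h1 h2
  have h3 : ¬ ∀ k : ℕ, ∃ n, (k : ℝ) ≤ ξ n ω := fun h => h2 ⟨h1, h⟩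
  push_neg at h3
  obtain ⟨k, hk⟩ := h3
  exact ⟨k, by rintro x ⟨n, rfl⟩; exact (hk n).le⟩

/-- The gluing construction: members of the family `{E_σ[X(τ)] : τ ∈ S_σ}` are
directed upwards. -/
lemma glue_exists (hT : 0 < T) {X : (Ω → ℝ) → Ω → ℝ} (hX : Admissible 𝔈 X)
    {σ τ₁ τ₂ : Ω → ℝ} (hσ : Stop0 ℱ T σ) (h1 : IsStopIn ℱ T σ τ₁)
    (h2 : IsStopIn ℱ T σ τ₂) :
    ∃ τ₃, IsStopIn ℱ T σ τ₃ ∧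
      𝔈.cond σ (X τ₃) =ᵐ[μ]
        fun ω => max (𝔈.cond σ (X τ₁) ω) (𝔈.cond σ (X τ₂) ω) := by
  have st1 := stop0_of_isStopIn hσ h1
  have st2 := stop0_of_isStopIn hσ h2
  obtain ⟨hm1, hp1, -⟩ := hX.1 τ₁ st1
  obtain ⟨hm2, hp2, -⟩ := hX.1 τ₂ st2
  have meas1 := 𝔈.cond_adapted hσ hm1 hp1
  have meas2 := 𝔈.cond_adapted hσ hm2 hp2
  set A : Set Ω := {ω | 𝔈.cond σ (X τ₂) ω ≤ 𝔈.cond σ (X τ₁) ω} with hA_def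
  have hA : MeasurableSet[hσ.1.measurableSpace] A := measurableSet_le meas2 meas1
  have hAm : MeasurableSet A := hσ.1.measurableSpace_le _ hA
  have hAt : ∀ t : ℝ, MeasurableSet[ℱ t] (A ∩ {ω | σ ω ≤ t}) :=
    fun t => by simpa using ((hσ.1.measurableSet A).mp hA).2 t
  have hAct : ∀ t : ℝ, MeasurableSet[ℱ t] (Aᶜ ∩ {ω | σ ω ≤ t}) :=
    fun t => by simpa using ((hσ.1.measurableSet Aᶜ).mp hA.compl).2 t
  set τ₃ : Ω → ℝ := A.piecewise τ₁ τ₂ with hτ₃_def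
  have hst : IsStoppingTime ℱ (fun ω => (τ₃ ω : WithTop ℝ)) := by
    intro t
    have hset0 : {ω | (τ₃ ω : WithTop ℝ) ≤ t} = {ω | τ₃ ω ≤ t} := by ext ω; simp
    have hset : {ω | τ₃ ω ≤ t} = (A ∩ {ω | τ₁ ω ≤ t}) ∪ (Aᶜ ∩ {ω | τ₂ ω ≤ t}) := by
      ext ω; by_cases hw : ω ∈ A <;> simp [hτ₃_def, Set.piecewise, hw]
    have e1 : A ∩ {ω | τ₁ ω ≤ t} = (A ∩ {ω | σ ω ≤ t}) ∩ {ω | τ₁ ω ≤ t} := by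
      ext ω
      simp only [Set.mem_inter_iff, Set.mem_setOf_eq]
      exact ⟨fun ⟨ha, h⟩ => ⟨⟨ha, le_trans (h1.2.1 ω) h⟩, h⟩, fun ⟨⟨ha, _⟩, h⟩ => ⟨ha, h⟩⟩
    have e2 : Aᶜ ∩ {ω | τ₂ ω ≤ t} = (Aᶜ ∩ {ω | σ ω ≤ t}) ∩ {ω | τ₂ ω ≤ t} := by
      ext ω
      simp only [Set.mem_inter_iff, Set.mem_setOf_eq]
      exact ⟨fun ⟨ha, h⟩ => ⟨⟨ha, le_trans (h2.2.1 ω) h⟩, h⟩, fun ⟨⟨ha, _⟩, h⟩ => ⟨ha, h⟩⟩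
    rw [hset0, hset, e1, e2]
    exact ((hAt t).inter (by simpa using h1.1 t)).union ((hAct t).inter (by simpa using h2.1 t))
  have hstopin3 : IsStopIn ℱ T σ τ₃ := by
    refine ⟨hst, fun ω => ?_, fun ω => ?_⟩
    · by_cases hw : ω ∈ A
      · rw [hτ₃_def, Set.piecewise_eq_of_mem _ _ _ hw]; exact h1.2.1 ω
      · rw [hτ₃_def, Set.piecewise_eq_of_notMem _ _ _ hw]; exact h2.2.1 ω
    · by_cases hw : ω ∈ A
      · rw [hτ₃_def, Set.piecewise_eq_of_mem _ _ _ hw]; exact h1.2.2 ω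
      · rw [hτ₃_def, Set.piecewise_eq_of_notMem _ _ _ hw]; exact h2.2.2 ω
  have st3 := stop0_of_isStopIn hσ hstopin3
  obtain ⟨hm3, hp3, -⟩ := hX.1 τ₃ st3
  have loc1 := hX.2 τ₃ τ₁ st3 st1
  have loc2 := hX.2 τ₃ τ₂ st3 st2
  have ind1 : A.indicator (X τ₃) =ᵐ[μ] A.indicator (X τ₁) := by
    filter_upwards [loc1] with ω h
    by_cases hw : ω ∈ A
    · rw [Set.indicator_of_mem hw, Set.indicator_of_mem hw,
        h (Set.piecewise_eq_of_mem _ _ _ hw)]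
    · rw [Set.indicator_of_notMem hw, Set.indicator_of_notMem hw]
  have ind2 : Aᶜ.indicator (X τ₃) =ᵐ[μ] Aᶜ.indicator (X τ₂) := by
    filter_upwards [loc2] with ω h
    by_cases hw : ω ∈ Aᶜ
    · rw [Set.indicator_of_mem hw, Set.indicator_of_mem hw,
        h (Set.piecewise_eq_of_notMem _ _ _ hw)]
    · rw [Set.indicator_of_notMem hw, Set.indicator_of_notMem hw]
  have indnn : ∀ {f : Ω → ℝ}, 0 ≤ᵐ[μ] f → ∀ s : Set Ω, 0 ≤ᵐ[μ] s.indicator f := by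
    intro f hf s
    filter_upwards [hf] with ω h
    exact Set.indicator_apply_nonneg fun _ => by simpa using h
  have z3 := 𝔈.zero_one hσ hm3 hp3 hA
  have z1 := 𝔈.zero_one hσ hm1 hp1 hA
  have z3c := 𝔈.zero_one hσ hm3 hp3 hA.compl
  have z2 := 𝔈.zero_one hσ hm2 hp2 hA.compl
  have cc1 := cond_congr hσ (𝔈.indicator_mem hm3 hAm) (indnn hp3 A)
    (𝔈.indicator_mem hm1 hAm) (indnn hp1 A) ind1
  have cc2 := cond_congr hσ (𝔈.indicator_mem hm3 hAm.compl) (indnn hp3 Aᶜ)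
    (𝔈.indicator_mem hm2 hAm.compl) (indnn hp2 Aᶜ) ind2
  have EA : A.indicator (𝔈.cond σ (X τ₃)) =ᵐ[μ] A.indicator (𝔈.cond σ (X τ₁)) :=
    z3.symm.trans (cc1.trans z1)
  have EAc : Aᶜ.indicator (𝔈.cond σ (X τ₃)) =ᵐ[μ] Aᶜ.indicator (𝔈.cond σ (X τ₂)) :=
    z3c.symm.trans (cc2.trans z2)
  refine ⟨τ₃, hstopin3, ?_⟩
  filter_upwards [EA, EAc] with ω hA1 hA2
  by_cases hw : ω ∈ A
  · have hw' : 𝔈.cond σ (X τ₂) ω ≤ 𝔈.cond σ (X τ₁) ω := hw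
    rw [Set.indicator_of_mem hw, Set.indicator_of_mem hw] at hA1
    rw [hA1, max_eq_left hw']
  · have hw' : 𝔈.cond σ (X τ₁) ω ≤ 𝔈.cond σ (X τ₂) ω := (not_le.mp hw).le
    have hwc : ω ∈ Aᶜ := hw
    rw [Set.indicator_of_mem hwc, Set.indicator_of_mem hwc] at hA2
    rw [hA2, max_eq_right hw']

/-- The value formula: `E₀[v(σ)] = sup_{ρ ∈ S_σ} E₀[X(ρ)]`, together with
`v(σ) ∈ Dom⁺(E)`. -/
lemma value_eq_sSup (hT : 0 < T) (𝔈 : FExp μ T ℱ) {X v : (Ω → ℝ) → Ω → ℝ}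
    (hX : Admissible 𝔈 X) (hbdd : BddRewardE0 𝔈 X) (hv : IsValueFam 𝔈 X v)
    {σ : Ω → ℝ} (hσ : Stop0 ℱ T σ) :
    v σ ∈ 𝔈.Dom ∧ 0 ≤ᵐ[μ] v σ ∧
      𝔈.E0 (v σ) = sSup ((fun ρ => 𝔈.E0 (X ρ)) '' {ρ | IsStopIn ℱ T σ ρ}) := by
  obtain ⟨C, hC⟩ := hbdd
  set S : Set ℝ := (fun ρ => 𝔈.E0 (X ρ)) '' {ρ | IsStopIn ℱ T σ ρ} with hS_def
  have hSne : S.Nonempty := ⟨_, ⟨σ, isStopIn_self hσ, rfl⟩⟩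
  have hSbdd : BddAbove S :=
    ⟨C, by rintro r ⟨ρ, hρ, rfl⟩; exact hC ρ (stop0_of_isStopIn hσ hρ)⟩
  set t : ℝ := sSup S with ht_def
  have hτex : ∀ n : ℕ, ∃ ρ, IsStopIn ℱ T σ ρ ∧ t - 1 / ((n : ℝ) + 1) < 𝔈.E0 (X ρ) := by
    intro n
    have hlt : t - 1 / ((n : ℝ) + 1) < t := sub_lt_self _ (by positivity)
    obtain ⟨r, ⟨ρ, hρ, rfl⟩, hr⟩ := exists_lt_of_lt_csSup hSne hlt
    exact ⟨ρ, hρ, hr⟩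
  choose τ hτstop hτlt using hτex
  have hglue : ∀ p : {ρ : Ω → ℝ // IsStopIn ℱ T σ ρ}, ∀ q : Ω → ℝ, IsStopIn ℱ T σ q →
      ∃ r, IsStopIn ℱ T σ r ∧
        𝔈.cond σ (X r) =ᵐ[μ] fun ω => max (𝔈.cond σ (X p.1) ω) (𝔈.cond σ (X q) ω) :=
    fun p q hq => glue_exists hT hX hσ p.2 hq
  obtain ⟨f, hf0, hfs⟩ :
      ∃ f : ℕ → {ρ : Ω → ℝ // IsStopIn ℱ T σ ρ}, (f 0).1 = τ 0 ∧
        ∀ k, 𝔈.cond σ (X (f (k + 1)).1) =ᵐ[μ]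
          fun ω => max (𝔈.cond σ (X (f k).1) ω) (𝔈.cond σ (X (τ (k + 1))) ω) := by
    refine ⟨fun n => Nat.rec ⟨τ 0, hτstop 0⟩
      (fun k p => ⟨(hglue p (τ (k + 1)) (hτstop (k + 1))).choose,
        (hglue p (τ (k + 1)) (hτstop (k + 1))).choose_spec.1⟩) n, rfl, fun k => ?_⟩
    exact (hglue _ (τ (k + 1)) (hτstop (k + 1))).choose_spec.2
  set ξ : ℕ → Ω → ℝ := fun n => 𝔈.cond σ (X (f n).1) with hξ_def
  have hfstop : ∀ n, Stop0 ℱ T (f n).1 := fun n => stop0_of_isStopIn hσ (f n).2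
  have hXf : ∀ n, X (f n).1 ∈ 𝔈.Dom ∧ 0 ≤ᵐ[μ] X (f n).1 := fun n =>
    ⟨(hX.1 _ (hfstop n)).1, (hX.1 _ (hfstop n)).2.1⟩
  have hmem : ∀ n, ξ n ∈ 𝔈.Dom := fun n => 𝔈.cond_mem hσ (hXf n).1 (hXf n).2
  have hpos : ∀ n, 0 ≤ᵐ[μ] ξ n := fun n => 𝔈.cond_nonneg hσ (hXf n).1 (hXf n).2
  have hmeas : ∀ n, Measurable (ξ n) := fun n =>
    (𝔈.cond_adapted hσ (hXf n).1 (hXf n).2).mono hσ.1.measurableSpace_le le_rfl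
  have hmono : ∀ᵐ ω ∂μ, ∀ n, ξ n ω ≤ ξ (n + 1) ω := by
    rw [ae_all_iff]
    intro n
    filter_upwards [hfs n] with ω h
    have h' : ξ (n + 1) ω = max (ξ n ω) (𝔈.cond σ (X (τ (n + 1))) ω) := h
    rw [h']
    exact le_max_left _ _
  have hdom : ∀ n, 𝔈.cond σ (X (τ n)) ≤ᵐ[μ] ξ n := by
    intro n
    cases n with
    | zero =>
      have h0 : ξ 0 = 𝔈.cond σ (X (τ 0)) := by
        show 𝔈.cond σ (X (f 0).1) = _
        rw [hf0]
      rw [h0]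
    | succ k =>
      filter_upwards [hfs k] with ω h
      have h' : ξ (k + 1) ω = max (ξ k ω) (𝔈.cond σ (X (τ (k + 1))) ω) := h
      rw [h']
      exact le_max_right _ _
  have hE0ξ : ∀ n, 𝔈.E0 (ξ n) = 𝔈.E0 (X (f n).1) := fun n =>
    E0_cond hT hσ (hXf n).1 (hXf n).2
  have hubd : ∀ n, 𝔈.E0 (ξ n) ≤ t := by
    intro n
    rw [hE0ξ n]
    exact le_csSup hSbdd ⟨(f n).1, (f n).2, rfl⟩
  have hXτmem : ∀ n, X (τ n) ∈ 𝔈.Dom ∧ 0 ≤ᵐ[μ] X (τ n) := fun n =>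
    ⟨(hX.1 _ (stop0_of_isStopIn hσ (hτstop n))).1,
      (hX.1 _ (stop0_of_isStopIn hσ (hτstop n))).2.1⟩
  have hlbd : ∀ n : ℕ, t - 1 / ((n : ℝ) + 1) < 𝔈.E0 (ξ n) := by
    intro n
    refine lt_of_lt_of_le (hτlt n) ?_
    calc 𝔈.E0 (X (τ n)) = 𝔈.E0 (𝔈.cond σ (X (τ n))) :=
        (E0_cond hT hσ (hXτmem n).1 (hXτmem n).2).symm
      _ ≤ 𝔈.E0 (ξ n) := E0_mono hT (𝔈.cond_mem hσ (hXτmem n).1 (hXτmem n).2)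
        (𝔈.cond_nonneg hσ (hXτmem n).1 (hXτmem n).2) (hmem n) (hpos n) (hdom n)
  have htendE0 : Tendsto (fun n => 𝔈.E0 (ξ n)) atTop (nhds t) := by
    have hlow : Tendsto (fun n : ℕ => t - 1 / ((n : ℝ) + 1)) atTop (nhds t) := by
      have h := tendsto_one_div_add_atTop_nhds_zero_nat (𝕜 := ℝ)
      simpa using tendsto_const_nhds.sub h
    exact tendsto_of_tendsto_of_tendsto_of_le_of_le hlow tendsto_const_nhds
      (fun n => (hlbd n).le) hubd
  have hbddae := ae_bddAbove_of_E0_bdd hT 𝔈 hmem hpos hmeas hmono hubd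
  set ζ : Ω → ℝ := fun ω => ⨆ n, ξ n ω with hζ_def
  have hζmeas : Measurable ζ := Measurable.iSup hmeas
  have htendζ : ∀ᵐ ω ∂μ, Tendsto (fun n => ξ n ω) atTop (nhds (ζ ω)) := by
    filter_upwards [hmono, hbddae] with ω h1 h2
    exact tendsto_atTop_ciSup (monotone_nat_of_le_succ h1) h2
  have hζmem : ζ ∈ 𝔈.Dom := 𝔈.h5 hmem hpos htendζ ⟨t, Frequently.of_forall hubd⟩
  have hζpos : 0 ≤ᵐ[μ] ζ := by
    filter_upwards [hpos 0, hbddae] with ω h1 h2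
    exact le_trans (by simpa using h1) (le_ciSup h2 0)
  have hE0ζ : Tendsto (fun n => 𝔈.E0 (ξ n)) atTop (nhds (𝔈.E0 ζ)) :=
    mct hT 𝔈 hmem hpos hmeas hζmem hζpos hζmeas hmono htendζ
  have hE0ζt : 𝔈.E0 ζ = t := tendsto_nhds_unique hE0ζ htendE0
  have hub : ∀ g ∈ {g | ∃ ρ, IsStopIn ℱ T σ ρ ∧ g = 𝔈.cond σ (X ρ)}, g ≤ᵐ[μ] ζ := by
    rintro g ⟨ρ, hρ, rfl⟩
    have hXρ := hX.1 ρ (stop0_of_isStopIn hσ hρ)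
    have hηmem : 𝔈.cond σ (X ρ) ∈ 𝔈.Dom := 𝔈.cond_mem hσ hXρ.1 hXρ.2.1
    have hηpos : 0 ≤ᵐ[μ] 𝔈.cond σ (X ρ) := 𝔈.cond_nonneg hσ hXρ.1 hXρ.2.1
    have hηmeas : Measurable (𝔈.cond σ (X ρ)) :=
      (𝔈.cond_adapted hσ hXρ.1 hXρ.2.1).mono hσ.1.measurableSpace_le le_rfl
    have hg : ∀ n : ℕ, ∃ r, IsStopIn ℱ T σ r ∧
        𝔈.cond σ (X r) =ᵐ[μ] fun ω => max (ξ n ω) (𝔈.cond σ (X ρ) ω) :=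
      fun n => glue_exists hT hX hσ (f n).2 hρ
    choose g hgstop hgspec using hg
    set χ : ℕ → Ω → ℝ := fun n => 𝔈.cond σ (X (g n)) with hχ_def
    have hXg : ∀ n, X (g n) ∈ 𝔈.Dom ∧ 0 ≤ᵐ[μ] X (g n) := fun n =>
      ⟨(hX.1 _ (stop0_of_isStopIn hσ (hgstop n))).1,
        (hX.1 _ (stop0_of_isStopIn hσ (hgstop n))).2.1⟩
    have hχmem : ∀ n, χ n ∈ 𝔈.Dom := fun n => 𝔈.cond_mem hσ (hXg n).1 (hXg n).2
    have hχpos : ∀ n, 0 ≤ᵐ[μ] χ n := fun n => 𝔈.cond_nonneg hσ (hXg n).1 (hXg n).2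
    have hχmeas : ∀ n, Measurable (χ n) := fun n =>
      (𝔈.cond_adapted hσ (hXg n).1 (hXg n).2).mono hσ.1.measurableSpace_le le_rfl
    set θ : Ω → ℝ := fun ω => max (ζ ω) (𝔈.cond σ (X ρ) ω) with hθ_def
    have hχmono : ∀ᵐ ω ∂μ, ∀ n, χ n ω ≤ χ (n + 1) ω := by
      rw [ae_all_iff]
      intro n
      filter_upwards [hgspec n, hgspec (n + 1), hmono] with ω e1 e2 hm
      have e1' : χ n ω = max (ξ n ω) (𝔈.cond σ (X ρ) ω) := e1
      have e2' : χ (n + 1) ω = max (ξ (n + 1) ω) (𝔈.cond σ (X ρ) ω) := e2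
      rw [e1', e2']
      exact max_le_max (hm n) le_rfl
    have hχtend : ∀ᵐ ω ∂μ, Tendsto (fun n => χ n ω) atTop (nhds (θ ω)) := by
      filter_upwards [ae_all_iff.mpr hgspec, htendζ] with ω hall htz
      have h' : Tendsto (fun n => max (ξ n ω) (𝔈.cond σ (X ρ) ω)) atTop
          (nhds (max (ζ ω) (𝔈.cond σ (X ρ) ω))) := htz.max tendsto_const_nhds
      exact h'.congr fun n => (hall n).symm
    have hχbd : ∀ n, 𝔈.E0 (χ n) ≤ t := by
      intro n
      have h' : 𝔈.E0 (χ n) = 𝔈.E0 (X (g n)) := E0_cond hT hσ (hXg n).1 (hXg n).2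
      rw [h']
      exact le_csSup hSbdd ⟨g n, hgstop n, rfl⟩
    have hθmem : θ ∈ 𝔈.Dom := 𝔈.h5 hχmem hχpos hχtend ⟨t, Frequently.of_forall hχbd⟩
    have hθpos : 0 ≤ᵐ[μ] θ := hζpos.mono fun ω h => le_trans h (le_max_left _ _)
    have hθmeas : Measurable θ := hζmeas.max hηmeas
    have hE0θ : Tendsto (fun n => 𝔈.E0 (χ n)) atTop (nhds (𝔈.E0 θ)) :=
      mct hT 𝔈 hχmem hχpos hχmeas hθmem hθpos hθmeas hχmono hχtend
    have hθle : 𝔈.E0 θ ≤ t := le_of_tendsto' hE0θ hχbd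
    have hζθ : 𝔈.E0 ζ = 𝔈.E0 θ := le_antisymm
      (E0_mono hT hζmem hζpos hθmem hθpos (Eventually.of_forall fun ω => le_max_left _ _))
      (by rw [hE0ζt]; exact hθle)
    have heq : ζ =ᵐ[μ] θ := by
      refine 𝔈.strict_mono (stop0_zero hT) hζmem hζpos hθmem hθpos
        (Eventually.of_forall fun ω => le_max_left _ _) ?_
      have e1 := 𝔈.E0_eq hζmem hζpos
      have e2 := 𝔈.E0_eq hθmem hθpos
      rw [hζθ] at e1
      exact e1.trans e2.symm
    filter_upwards [heq] with ω h
    calc 𝔈.cond σ (X ρ) ω ≤ max (ζ ω) (𝔈.cond σ (X ρ) ω) := le_max_right _ _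
      _ = ζ ω := h.symm
  have hvup : v σ ≤ᵐ[μ] ζ := (hv σ hσ).2 ζ hub
  have hvlo : ζ ≤ᵐ[μ] v σ := by
    have hmemfam : ∀ n, ξ n ≤ᵐ[μ] v σ := fun n => (hv σ hσ).1 _ ⟨(f n).1, (f n).2, rfl⟩
    filter_upwards [ae_all_iff.mpr hmemfam, hbddae] with ω hall hbd
    exact ciSup_le fun n => hall n
  have hv0 : 0 ≤ᵐ[μ] v σ := by
    have h1 := (hv σ hσ).1 _ ⟨σ, isStopIn_self hσ, rfl⟩
    have h2 := 𝔈.cond_nonneg hσ (hX.1 σ hσ).1 (hX.1 σ hσ).2.1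
    exact h2.trans h1
  have hveq : v σ =ᵐ[μ] ζ := hvup.antisymm hvlo
  have hvmem : v σ ∈ 𝔈.Dom := 𝔈.sandwich_mem hζmem
    (by filter_upwards [hv0, hvup] with ω h1 h2; exact ⟨by simpa using h1, h2⟩)
  refine ⟨hvmem, hv0, ?_⟩
  rw [E0_congr hT hvmem hv0 hζmem hζpos hveq, hE0ζt]

end Aux

/-- the value function family of an RCE admissible family is RCE. -/
theorem valueFam_RCE [IsProbabilityMeasure μ] (hT : 0 < T) (𝔈 : FExp μ T ℱ)
    (X v : (Ω → ℝ) → Ω → ℝ) (hX : Admissible 𝔈 X) (hXrce : RCE 𝔈 X)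
    (hbdd : BddRewardE0 𝔈 X) (hv : IsValueFam 𝔈 X v) :
    RCE 𝔈 v := by
  intro τ hτ τs hτs hmt
  obtain ⟨C, hC⟩ := hbdd
  have hSbdd : ∀ {σ : Ω → ℝ}, Stop0 ℱ T σ →
      BddAbove ((fun ρ => 𝔈.E0 (X ρ)) '' {ρ | IsStopIn ℱ T σ ρ}) := fun {σ} hσ =>
    ⟨C, by rintro r ⟨ρ, hρ, rfl⟩; exact hC ρ (stop0_of_isStopIn hσ hρ)⟩
  have hSne : ∀ {σ : Ω → ℝ}, Stop0 ℱ T σ →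
      ((fun ρ => 𝔈.E0 (X ρ)) '' {ρ | IsStopIn ℱ T σ ρ}).Nonempty :=
    fun {σ} hσ => ⟨_, ⟨σ, isStopIn_self hσ, rfl⟩⟩
  have hvτ := value_eq_sSup hT 𝔈 hX ⟨C, hC⟩ hv hτ
  have hvτs : ∀ n, 𝔈.E0 (v (τs n)) =
      sSup ((fun ρ => 𝔈.E0 (X ρ)) '' {ρ | IsStopIn ℱ T (τs n) ρ}) := fun n =>
    (value_eq_sSup hT 𝔈 hX ⟨C, hC⟩ hv (hτs n)).2.2
  rw [hvτ.2.2, show (fun n => 𝔈.E0 (v (τs n))) =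
    fun n => sSup ((fun ρ => 𝔈.E0 (X ρ)) '' {ρ | IsStopIn ℱ T (τs n) ρ}) from funext hvτs]
  have hle : ∀ n, sSup ((fun ρ => 𝔈.E0 (X ρ)) '' {ρ | IsStopIn ℱ T (τs n) ρ}) ≤
      sSup ((fun ρ => 𝔈.E0 (X ρ)) '' {ρ | IsStopIn ℱ T τ ρ}) := by
    intro n
    refine csSup_le (hSne (hτs n)) ?_
    rintro r ⟨ρ, hρ, rfl⟩
    have hρ' : IsStopIn ℱ T τ fun ω => max (ρ ω) (τ ω) :=
      ⟨hρ.1.max hτ.1, fun ω => le_max_right _ _, fun ω => max_le (hρ.2.2 ω) (hτ.2.2 ω)⟩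
    have hst : Stop0 ℱ T ρ := stop0_of_isStopIn (hτs n) hρ
    have hst' : Stop0 ℱ T fun ω => max (ρ ω) (τ ω) := stop0_of_isStopIn hτ hρ'
    have heq : X ρ =ᵐ[μ] X fun ω => max (ρ ω) (τ ω) := by
      filter_upwards [hX.2 ρ (fun ω => max (ρ ω) (τ ω)) hst hst', hmt] with ω h hm
      have hτle : τ ω ≤ τs n ω := hm.1.le_of_tendsto hm.2 n
      exact h (max_eq_left (le_trans hτle (hρ.2.1 ω))).symm
    have hmemρ := hX.1 ρ hst
    have hmemρ' := hX.1 _ hst'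
    exact (E0_congr hT hmemρ.1 hmemρ.2.1 hmemρ'.1 hmemρ'.2.1 heq).trans_le
      (le_csSup (hSbdd hτ) ⟨_, hρ', rfl⟩)
  rw [Metric.tendsto_atTop]
  intro ε hε
  obtain ⟨r, ⟨ρ, hρ, rfl⟩, hr⟩ := exists_lt_of_lt_csSup (hSne hτ)
    (show sSup ((fun ρ => 𝔈.E0 (X ρ)) '' {ρ | IsStopIn ℱ T τ ρ}) - ε <
      sSup ((fun ρ => 𝔈.E0 (X ρ)) '' {ρ | IsStopIn ℱ T τ ρ}) from sub_lt_self _ hε)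
  have hstρ : Stop0 ℱ T ρ := stop0_of_isStopIn hτ hρ
  set ρn : ℕ → Ω → ℝ := fun n ω => max (ρ ω) (τs n ω) with hρn_def
  have hρnstop : ∀ n, IsStopIn ℱ T (τs n) (ρn n) := fun n =>
    ⟨hstρ.1.max (hτs n).1, fun ω => le_max_right _ _,
      fun ω => max_le (hρ.2.2 ω) ((hτs n).2.2 ω)⟩
  have hρnstop0 : ∀ n, Stop0 ℱ T (ρn n) := fun n => stop0_of_isStopIn (hτs n) (hρnstop n)
  have hconv : Tendsto (fun n => 𝔈.E0 (X (ρn n))) atTop (nhds (𝔈.E0 (X ρ))) := by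
    refine hXrce ρ hstρ ρn hρnstop0 ?_
    filter_upwards [hmt] with ω hm
    constructor
    · intro a b hab
      exact max_le_max le_rfl (hm.1 hab)
    · have h' : Tendsto (fun n => max (ρ ω) (τs n ω)) atTop
        (nhds (max (ρ ω) (τ ω))) := tendsto_const_nhds.max hm.2
      rwa [max_eq_left (hρ.2.1 ω)] at h'
  have hev : ∀ᶠ n in atTop,
      sSup ((fun ρ => 𝔈.E0 (X ρ)) '' {ρ | IsStopIn ℱ T τ ρ}) - ε < 𝔈.E0 (X (ρn n)) :=
    hconv.eventually (eventually_gt_nhds hr)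
  obtain ⟨N, hN⟩ := eventually_atTop.mp hev
  refine ⟨N, fun n hn => ?_⟩
  have h1 : sSup ((fun ρ => 𝔈.E0 (X ρ)) '' {ρ | IsStopIn ℱ T τ ρ}) - ε <
      sSup ((fun ρ => 𝔈.E0 (X ρ)) '' {ρ | IsStopIn ℱ T (τs n) ρ}) :=
    lt_of_lt_of_le (hN n hn) (le_csSup (hSbdd (hτs n)) ⟨ρn n, hρnstop n, rfl⟩)
  have h2 := hle n
  rw [Real.dist_eq, abs_lt]
  constructor <;> linarith

end OptMultStop
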